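/- For all g ≥ 0 and q ≥ 1, the independence number of G_q(g) equals ((q+1)(q+2)/2)^g. -/

import Mathlib

/-- Edge corona product `G ⊛ K_q`: keep `G`, and for each edge of `G` add a fresh
copy of the complete graph on `q` vertices, joining all its vertices to both
endpoints of the edge. -/
def edgeCorona {V : Type} (G : SimpleGraph V) (q : ℕ) :
    SimpleGraph (V ⊕ (G.edgeSet × Fin q)) where
  Adj := fun x y => match x, y with
    | Sum.inl u, Sum.inl v => G.Adj u v
    | Sum.inl u, Sum.inr p => u ∈ (p.1 : Sym2 V)
    | Sum.inr p, Sum.inl v => v ∈ (p.1 : Sym2 V)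
    | Sum.inr p, Sum.inr r => p.1 = r.1 ∧ p.2 ≠ r.2
  symm := ⟨by
    rintro (u | p) (v | r) h
    · exact G.adj_symm h
    · exact h
    · exact h
    · exact ⟨h.1.symm, h.2.symm⟩⟩
  loopless := ⟨by
    rintro (u | p) h
    · exact G.loopless.irrefl u h
    · exact h.2 rfl⟩

/-- The simplicial network `G_q(g)` together with its vertex type:
`G_q(0) = K_{q+2}` and `G_q(g+1) = G_q(g) ⊛ K_q`. -/
def Gaux (q : ℕ) : ℕ → Σ V : Type, SimpleGraph V
  | 0 => ⟨Fin (q + 2), ⊤⟩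
  | g + 1 => ⟨_, edgeCorona (Gaux q g).2 q⟩

abbrev GVert (q g : ℕ) : Type := (Gaux q g).1

abbrev Gnet (q g : ℕ) : SimpleGraph (GVert q g) := (Gaux q g).2

/-- The `q+2` hub nodes of `G_q(g)`: the vertices present from iteration `0`. -/
def hub (q : ℕ) : (g : ℕ) → Fin (q + 2) → GVert q g
  | 0 => id
  | g + 1 => fun k => Sum.inl (hub q g k)

/-- A set of vertices is independent if its elements are pairwise non-adjacent. -/
def IsIndependentSet {V : Type} (G : SimpleGraph V) (s : Finset V) : Prop :=
  (s : Set V).Pairwise fun u v => ¬ G.Adj u v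

/-- The independence number: the largest cardinality of an independent set. -/
noncomputable def indepNum {V : Type} (G : SimpleGraph V) : ℕ :=
  sSup {n | ∃ s : Finset V, IsIndependentSet G s ∧ s.card = n}

open Finset


section CoronaLemmas

variable {V : Type} (G : SimpleGraph V) (q : ℕ)

@[simp] lemma edgeCorona_adj_inl_inl (u v : V) :
    (edgeCorona G q).Adj (Sum.inl u) (Sum.inl v) ↔ G.Adj u v := Iff.rfl

@[simp] lemma edgeCorona_adj_inl_inr (u : V) (p : G.edgeSet × Fin q) :
    (edgeCorona G q).Adj (Sum.inl u) (Sum.inr p) ↔ u ∈ (p.1 : Sym2 V) := Iff.rfl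

@[simp] lemma edgeCorona_adj_inr_inl (v : V) (p : G.edgeSet × Fin q) :
    (edgeCorona G q).Adj (Sum.inr p) (Sum.inl v) ↔ v ∈ (p.1 : Sym2 V) := Iff.rfl

@[simp] lemma edgeCorona_adj_inr_inr (p r : G.edgeSet × Fin q) :
    (edgeCorona G q).Adj (Sum.inr p) (Sum.inr r) ↔ p.1 = r.1 ∧ p.2 ≠ r.2 := Iff.rfl

instance decAdjCorona [DecidableEq V] [DecidableRel G.Adj] :
    DecidableRel (edgeCorona G q).Adj := fun x y =>
  match x, y with
  | Sum.inl u, Sum.inl v => inferInstanceAs (Decidable (G.Adj u v))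
  | Sum.inl u, Sum.inr p => inferInstanceAs (Decidable (u ∈ (p.1 : Sym2 V)))
  | Sum.inr p, Sum.inl v => inferInstanceAs (Decidable (v ∈ (p.1 : Sym2 V)))
  | Sum.inr p, Sum.inr r => inferInstanceAs (Decidable (p.1 = r.1 ∧ p.2 ≠ r.2))

end CoronaLemmas

section Degrees

variable {V : Type} [Fintype V] [DecidableEq V] (G : SimpleGraph V) [DecidableRel G.Adj] (q : ℕ)

lemma corona_neighborFinset_inr (p : G.edgeSet × Fin q) (a b : V) (hab : (p.1 : Sym2 V) = s(a, b)) :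
    (edgeCorona G q).neighborFinset (Sum.inr p) =
      ({Sum.inl a, Sum.inl b} : Finset (V ⊕ (G.edgeSet × Fin q))) ∪
        ((univ.erase p.2).image fun j => Sum.inr (p.1, j)) := by
  ext y
  rcases y with v | r
  · simp [SimpleGraph.mem_neighborFinset, hab, Sym2.mem_iff, or_comm]
  · simp only [SimpleGraph.mem_neighborFinset, edgeCorona_adj_inr_inr, mem_union, mem_image,
      mem_erase, mem_univ, and_true, mem_insert, mem_singleton, Sum.inr.injEq, Prod.ext_iff]
    constructor
    · rintro ⟨h1, h2⟩
      exact Or.inr ⟨r.2, fun h => h2 h.symm, h1, rfl⟩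
    · rintro (h | ⟨j, hj, h1, h2⟩)
      · simp at h
      · exact ⟨h1, fun h => hj (h2 ▸ h.symm)⟩

lemma corona_degree_inr (p : G.edgeSet × Fin q) :
    (edgeCorona G q).degree (Sum.inr p) = q + 1 := by
  obtain ⟨⟨e, he⟩, i⟩ := p
  induction e using Sym2.ind with
  | _ a b =>
    have hq : 0 < q := i.pos
    have hab : a ≠ b := (G.mem_edgeSet.mp he).ne
    rw [SimpleGraph.degree, corona_neighborFinset_inr G q (⟨s(a, b), he⟩, i) a b rfl,
      card_union_of_disjoint (by simp [Finset.disjoint_left]),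
      card_image_of_injective _ (fun j k h => by simpa [Prod.ext_iff] using h),
      card_erase_of_mem (mem_univ _)]
    have h2 : Sum.inl a ≠ (Sum.inl b : V ⊕ (G.edgeSet × Fin q)) := by simp [hab]
    rw [card_insert_of_notMem (by simp [hab]), card_singleton, card_univ, Fintype.card_fin]
    omega

lemma corona_neighborFinset_inl (u : V) :
    (edgeCorona G q).neighborFinset (Sum.inl u) =
      (G.neighborFinset u).image Sum.inl ∪
        (univ.filter fun p : G.edgeSet × Fin q => u ∈ (p.1 : Sym2 V)).image Sum.inr := by
  ext y
  rcases y with v | r <;> simp [SimpleGraph.mem_neighborFinset]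

lemma card_filter_mem_edge (u : V) :
    #(univ.filter fun e : G.edgeSet => u ∈ (e : Sym2 V)) = G.degree u := by
  rw [← G.card_incidenceFinset_eq_degree]
  apply card_bij (fun (e : G.edgeSet) (_ : e ∈ univ.filter fun e : G.edgeSet => u ∈ (e : Sym2 V)) => (e : Sym2 V))
  · intro e he
    rw [SimpleGraph.mem_incidenceFinset]
    exact ⟨e.2, (mem_filter.mp he).2⟩
  · intro e _ f _ h
    exact Subtype.ext h
  · intro e he
    rw [SimpleGraph.mem_incidenceFinset] at he
    exact ⟨⟨e, he.1⟩, mem_filter.mpr ⟨mem_univ _, he.2⟩, rfl⟩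

lemma corona_degree_inl (u : V) :
    (edgeCorona G q).degree (Sum.inl u) = (q + 1) * G.degree u := by
  have hfil : (univ.filter fun p : G.edgeSet × Fin q => u ∈ (p.1 : Sym2 V)) =
      (univ.filter fun e : G.edgeSet => u ∈ (e : Sym2 V)) ×ˢ univ := by
    ext ⟨e, j⟩
    simp [Finset.mem_product]
  rw [SimpleGraph.degree, corona_neighborFinset_inl,
    card_union_of_disjoint (by simp [Finset.disjoint_left]),
    card_image_of_injective _ Sum.inl_injective,
    card_image_of_injective _ Sum.inr_injective, hfil, card_product,
    card_filter_mem_edge, card_univ, Fintype.card_fin]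
  rw [SimpleGraph.degree]
  ring

lemma card_edgeFinset_corona (hq : 1 ≤ q) :
    #(edgeCorona G q).edgeFinset = (q + 1) * (q + 2) / 2 * #G.edgeFinset := by
  have key : 2 * #(edgeCorona G q).edgeFinset = 2 * ((q + 1) * (q + 2) / 2 * #G.edgeFinset) := by
    rw [← SimpleGraph.sum_degrees_eq_twice_card_edges, Fintype.sum_sum_type]
    simp only [corona_degree_inl, corona_degree_inr]
    rw [← Finset.mul_sum, SimpleGraph.sum_degrees_eq_twice_card_edges, Finset.sum_const,
      card_univ, Fintype.card_prod, Fintype.card_fin, ← SimpleGraph.edgeFinset_card]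
    have h2 : 2 * ((q + 1) * (q + 2) / 2) = (q + 1) * (q + 2) :=
      Nat.two_mul_div_two_of_even (by simpa [mul_comm] using Nat.even_mul_succ_self (q + 1))
    rw [smul_eq_mul, ← mul_assoc, ← mul_assoc, h2]
    ring
  omega

end Degrees

lemma indepNum_eq {V : Type} (G : SimpleGraph V) (n : ℕ)
    (hex : ∃ s : Finset V, IsIndependentSet G s ∧ s.card = n)
    (hub : ∀ s : Finset V, IsIndependentSet G s → s.card ≤ n) :
    indepNum G = n := by
  have hbdd : n ∈ upperBounds {m | ∃ s : Finset V, IsIndependentSet G s ∧ s.card = m} := by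
    rintro m ⟨s, hs, rfl⟩
    exact hub s hs
  exact le_antisymm (csSup_le ⟨n, hex⟩ hbdd) (le_csSup ⟨n, hbdd⟩ hex)

lemma indepNum_top (n : ℕ) (hn : 1 ≤ n) : indepNum (⊤ : SimpleGraph (Fin n)) = 1 := by
  apply indepNum_eq
  · exact ⟨{⟨0, hn⟩}, by simp [IsIndependentSet], card_singleton _⟩
  · intro s hs
    apply Finset.card_le_one.mpr
    intro a ha b hb
    by_contra hne
    exact hs ha hb hne hne

section IndepCorona

variable {V : Type} [Fintype V] [DecidableEq V] (G : SimpleGraph V) [DecidableRel G.Adj] (q : ℕ)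

lemma indepNum_corona (hq : 1 ≤ q) (hdeg : ∀ v : V, ∃ w, G.Adj v w) :
    indepNum (edgeCorona G q) = #G.edgeFinset := by
  apply indepNum_eq
  · refine ⟨univ.image fun e : G.edgeSet =>
      (Sum.inr (e, ⟨0, hq⟩) : V ⊕ (G.edgeSet × Fin q)), ?_, ?_⟩
    · rintro x hx y hy hne hadj
      simp only [coe_image, Set.mem_image, coe_univ, Set.mem_univ, Set.image_univ,
        Set.mem_range] at hx hy
      obtain ⟨e, rfl⟩ := hx
      obtain ⟨f, rfl⟩ := hy
      exact ((edgeCorona_adj_inr_inr G q _ _).mp hadj).2 rfl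
    · rw [card_image_of_injective _ (fun e f h => by simpa [Prod.ext_iff] using h), card_univ,
        SimpleGraph.edgeFinset_card]
  · intro s hs
    apply card_le_card_of_injOn
      (Sum.elim (fun u => s(u, (hdeg u).choose)) (fun p => (p.1 : Sym2 V)))
    · rintro (u | p) ha
      · rw [Sum.elim_inl, Finset.mem_coe, SimpleGraph.mem_edgeFinset]
        exact (hdeg u).choose_spec
      · rw [Sum.elim_inr, Finset.mem_coe, SimpleGraph.mem_edgeFinset]
        exact p.1.2
    · rintro (u | p) ha (v | r) hb hfab <;>
        simp only [Sum.elim_inl, Sum.elim_inr] at hfab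
      · by_contra hne
        have huv : u ≠ v := fun h => hne (congrArg _ h)
        have hnadj : ¬ G.Adj u v := hs ha hb hne
        have hmem : u ∈ s(v, (hdeg v).choose) := hfab ▸ Sym2.mem_mk_left u _
        rcases Sym2.mem_iff.mp hmem with h | h
        · exact huv h
        · exact hnadj (G.adj_symm (h ▸ (hdeg v).choose_spec))
      · exact absurd ((edgeCorona_adj_inl_inr G q u r).mpr (hfab ▸ Sym2.mem_mk_left u _))
          (hs ha hb (by simp))
      · exact absurd ((edgeCorona_adj_inr_inl G q v p).mpr (hfab ▸ Sym2.mem_mk_left v _))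
          (hs ha hb (by simp))
      · by_contra hne
        have hpr : p ≠ r := fun h => hne (congrArg _ h)
        have h1 : p.1 = r.1 := Subtype.ext hfab
        have h2 : p.2 ≠ r.2 := fun h => hpr (Prod.ext h1 h)
        exact hs ha hb hne ((edgeCorona_adj_inr_inr G q p r).mpr ⟨h1, h2⟩)

end IndepCorona


def decEqGVert (q : ℕ) : (g : ℕ) → DecidableEq (GVert q g)
  | 0 => inferInstanceAs (DecidableEq (Fin (q + 2)))
  | g + 1 =>
    letI := decEqGVert q g
    inferInstanceAs (DecidableEq (GVert q g ⊕ ((Gnet q g).edgeSet × Fin q)))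

instance (q g : ℕ) : DecidableEq (GVert q g) := decEqGVert q g

def decAdjGnet (q : ℕ) : (g : ℕ) → DecidableRel (Gnet q g).Adj
  | 0 => inferInstanceAs (DecidableRel (⊤ : SimpleGraph (Fin (q + 2))).Adj)
  | g + 1 =>
    letI := decAdjGnet q g
    inferInstanceAs (DecidableRel (edgeCorona (Gnet q g) q).Adj)

instance (q g : ℕ) : DecidableRel (Gnet q g).Adj := decAdjGnet q g

def fintypeGVert (q : ℕ) : (g : ℕ) → Fintype (GVert q g)
  | 0 => inferInstanceAs (Fintype (Fin (q + 2)))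
  | g + 1 =>
    letI := fintypeGVert q g
    inferInstanceAs (Fintype (GVert q g ⊕ ((Gnet q g).edgeSet × Fin q)))

instance (q g : ℕ) : Fintype (GVert q g) := fintypeGVert q g

lemma exists_adj (q : ℕ) : ∀ (g : ℕ) (v : GVert q g), ∃ w, (Gnet q g).Adj v w
  | 0, v => by
    have hcard : Fintype.card (GVert q 0) = q + 2 := by
      rw [show Fintype.card (GVert q 0) = Fintype.card (Fin (q + 2)) from
        Fintype.card_congr (Equiv.refl _), Fintype.card_fin]
    obtain ⟨w, hw⟩ := Fintype.exists_ne_of_one_lt_card (by omega) v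
    exact ⟨w, Ne.symm hw⟩
  | g + 1, v => by
    show ∃ w, (edgeCorona (Gnet q g) q).Adj v w
    revert v
    rintro (u | ⟨⟨e, he⟩, i⟩)
    · obtain ⟨w, hw⟩ := exists_adj q g u
      exact ⟨Sum.inl w, hw⟩
    · induction e using Sym2.ind with
      | _ a b => exact ⟨Sum.inl a, Sym2.mem_mk_left a b⟩

lemma Gnet_key (q : ℕ) (hq : 1 ≤ q) :
    ∀ g : ℕ, indepNum (Gnet q g) = ((q + 1) * (q + 2) / 2) ^ g ∧
      #(Gnet q g).edgeFinset = ((q + 1) * (q + 2) / 2) ^ (g + 1)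
  | 0 => by
    constructor
    · rw [pow_zero]
      exact indepNum_top (q + 2) (by omega)
    · show #(⊤ : SimpleGraph (Fin (q + 2))).edgeFinset = _
      rw [SimpleGraph.card_edgeFinset_top_eq_card_choose_two, Fintype.card_fin,
        Nat.choose_two_right, pow_one]
      congr 1
      rw [mul_comm]
      rfl
    | g + 1 => by
    obtain ⟨ih1, ih2⟩ := Gnet_key q hq g
    constructor
    · show indepNum (edgeCorona (Gnet q g) q) = _
      rw [indepNum_corona (Gnet q g) q hq (exists_adj q g), ih2]
    · show #(edgeCorona (Gnet q g) q).edgeFinset = _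
      rw [card_edgeFinset_corona (Gnet q g) q hq, ih2, ← pow_succ']

/-- For all `g ≥ 0`, `q ≥ 1`, the independence number of `G_q(g)` equals
`((q+1)(q+2)/2)^g`. -/
theorem indepNum_Gnet (q g : ℕ) (hq : 1 ≤ q) :
    indepNum (Gnet q g) = ((q + 1) * (q + 2) / 2) ^ g :=
  (Gnet_key q hq g).1
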